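/- arXiv:1609.05675 — 5 statements merged into one kernel-verified Lean document; each statement's English description precedes it below -/
import Mathlib

section
/- If a, b, c, d, n are integers with d > 0, b > 0 and a/b ≤ c/d (as rationals), then a + ⌈c(n-b)/d⌉ ≤ ⌈cn/d⌉. -/
theorem ceil_frac_bound (a b c d n : ℤ) (hd : 0 < d) (hb : 0 < b)
    (h : (a : ℚ) / (b : ℚ) ≤ (c : ℚ) / (d : ℚ)) :
    a + ⌈((c : ℚ) * ((n : ℚ) - (b : ℚ))) / (d : ℚ)⌉ ≤ ⌈((c : ℚ) * (n : ℚ)) / (d : ℚ)⌉ := by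
  have hd' : (0:ℚ) < d := by exact_mod_cast hd
  have hb' : (0:ℚ) < b := by exact_mod_cast hb
  rw [div_le_div_iff₀ hb' hd'] at h
  have ha : (a:ℚ) ≤ (c:ℚ) * b / d := by
    rw [le_div_iff₀ hd']; linarith
  have key : (c:ℚ) * ((n:ℚ) - b) / d + a ≤ (c:ℚ) * n / d := by
    have : (c:ℚ) * ((n:ℚ) - b) / d = (c:ℚ) * n / d - (c:ℚ) * b / d := by ring
    linarith
  calc a + ⌈((c : ℚ) * ((n : ℚ) - (b : ℚ))) / (d : ℚ)⌉
      = ⌈((c : ℚ) * ((n : ℚ) - (b : ℚ))) / (d : ℚ) + a⌉ := by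
        rw [Int.ceil_add_intCast]; ring
    _ ≤ ⌈((c : ℚ) * (n : ℚ)) / (d : ℚ)⌉ := Int.ceil_le_ceil key
end

section
/- Let T be a finite tree of order at least 3 and let T* be the twin-free tree associated to T, obtained by deleting all but one leaf from every maximal set of pairwise twin leaves. Then for every integer k ≥ 1, γ_{B_k}(T) = γ_{B_k}(T*). -/
/-- `f` is a dominating `k`-broadcast on `G`: each value is at most `k`, and every
vertex `u` is `f`-dominated by some vertex `v` with `f v ≥ 1` and `d(u,v) ≤ f v`. -/
def IsDomKBroadcast {V : Type*} (G : SimpleGraph V) (k : ℕ) (f : V → ℕ) : Prop :=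
  (∀ v, f v ≤ k) ∧ ∀ u, ∃ v, 1 ≤ f v ∧ G.Reachable u v ∧ G.dist u v ≤ f v

/-- The dominating `k`-broadcast number: minimum cost of a dominating `k`-broadcast. -/
noncomputable def gammaBk {V : Type*} (G : SimpleGraph V) (k : ℕ) : ℕ :=
  sInf {c : ℕ | ∃ f : V → ℕ, IsDomKBroadcast G k f ∧ ∑ᶠ v, f v = c}

/-- The radius of a graph: the minimum eccentricity of a vertex. -/
noncomputable def grad {V : Type*} (G : SimpleGraph V) : ℕ :=
  sInf {e : ℕ | ∃ v : V, ∀ u : V, G.dist v u ≤ e}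

/-- A leaf is a vertex of degree one, i.e. with a unique neighbor. -/
def IsLeaf {V : Type*} (G : SimpleGraph V) (u : V) : Prop := ∃! w, G.Adj u w

open SimpleGraph

section Aux

variable {V : Type*} {T : SimpleGraph V}

lemma closed_mem {C : Set V} (hC : ∀ a ∈ C, ∀ b, T.Adj a b → b ∈ C)
    {u x : V} (p : T.Walk u x) : u ∈ C → x ∈ C := by
  induction p with
  | nil => exact id
  | cons h q ih => exact fun hu => ih (hC _ hu _ h)

lemma support_not_leaf [Fintype V] (hconn : T.Connected) (hcard : 3 ≤ Fintype.card V)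
    {u v : V} (hu : IsLeaf T u) (huv : T.Adj u v) : ¬ IsLeaf T v := by
  classical
  intro hv
  obtain ⟨zu, _, huu⟩ := hu
  obtain ⟨zv, _, hvv⟩ := hv
  have hC : ∀ a ∈ ({u, v} : Set V), ∀ b, T.Adj a b → b ∈ ({u, v} : Set V) := by
    rintro a (rfl | rfl) b hb
    · right; exact (huu b hb).trans (huu v huv).symm
    · left; exact (hvv b hb).trans (hvv u huv.symm).symm
  have hall : ∀ x : V, x ∈ ({u, v} : Set V) := by
    intro x
    obtain ⟨p⟩ := hconn u x
    exact closed_mem hC p (Or.inl rfl)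
  have hsub : (Finset.univ : Finset V) ⊆ {u, v} := by
    intro x _
    simpa using hall x
  have := Finset.card_le_card hsub
  have h2 : ({u, v} : Finset V).card ≤ 2 :=
    (Finset.card_insert_le _ _).trans (by simp)
  rw [Finset.card_univ] at this
  omega

lemma leaf_dist (hconn : T.Connected) {u v : V} (hu : IsLeaf T u) (huv : T.Adj u v)
    {w : V} (hw : w ≠ u) : T.dist u w = T.dist v w + 1 := by
  have h2 : T.dist u v = 1 := dist_eq_one_iff_adj.mpr huv
  have htri := hconn.dist_triangle (u := u) (v := v) (w := w)
  have h3 : T.dist v w + 1 ≤ T.dist u w := by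
    obtain ⟨p, hp⟩ := hconn.exists_walk_length_eq_dist u w
    cases p with
    | nil => exact absurd rfl hw.symm
    | @cons _ b _ h q =>
      obtain ⟨z, _, huniq⟩ := hu
      have hb : b = v := (huniq _ h).trans (huniq v huv).symm
      subst hb
      have := SimpleGraph.dist_le q
      rw [Walk.length_cons] at hp
      omega
  omega

lemma path_support_not_leaf {a b : V} (p : T.Walk a b) (hp : p.IsPath)
    {c : V} (hc : c ∈ p.support) (hca : c ≠ a) (hcb : c ≠ b) : ¬ IsLeaf T c := by
  rintro ⟨z, _, huniq⟩
  obtain ⟨q, r, rfl⟩ := Walk.mem_support_iff_exists_append.mp hc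
  have hqn : ¬ q.reverse.Nil := by
    rw [Walk.nil_iff_length_eq, Walk.length_reverse]
    intro h
    exact hca (Walk.eq_of_length_eq_zero h).symm
  have hrn : ¬ r.Nil := by
    rw [Walk.nil_iff_length_eq]
    intro h
    exact hcb (Walk.eq_of_length_eq_zero h)
  obtain ⟨x, hx, q2, hq2⟩ := Walk.not_nil_iff.mp hqn
  obtain ⟨y, hy, r2, hr2⟩ := Walk.not_nil_iff.mp hrn
  have hxy : x = y := (huniq x hx).trans (huniq y hy).symm
  have hxq : x ∈ q.support := by
    have : x ∈ q.reverse.support := by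
      rw [hq2, Walk.support_cons]
      exact List.mem_cons_of_mem _ q2.start_mem_support
    rwa [Walk.support_reverse, List.mem_reverse] at this
  have hyr : y ∈ r.support.tail := by
    rw [hr2, Walk.support_cons, List.tail_cons]
    exact r2.start_mem_support
  have hnd : ((q.append r).support).Nodup := hp.support_nodup
  rw [Walk.support_append, List.nodup_append] at hnd
  exact hnd.2.2 x hxq y hyr hxy

lemma lift_walk {S : Set V} : ∀ {a b : V} (p : T.Walk a b) (ha : a ∈ S) (hb : b ∈ S),
    (∀ c ∈ p.support, c ∈ S) →
    ∃ q : (T.induce S).Walk ⟨a, ha⟩ ⟨b, hb⟩, q.length = p.length := by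
  intro a b p
  induction p with
  | nil => exact fun ha hb _ => ⟨.nil, rfl⟩
  | @cons a c b h p ih =>
    intro ha hb hsub
    have hc : c ∈ S := hsub c (by simp [Walk.support_cons])
    obtain ⟨q, hq⟩ := ih hc hb (fun x hx => hsub x (by simp [Walk.support_cons, hx]))
    refine ⟨.cons (show (T.induce S).Adj ⟨a, ha⟩ ⟨c, hc⟩ from h) q, ?_⟩
    simp [Walk.length_cons, hq]

/-- The homomorphism from an induced subgraph back to the graph. -/
def induceVal (T : SimpleGraph V) (S : Set V) : T.induce S →g T :=
  ⟨Subtype.val, fun h => h⟩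

lemma induce_dist (hconn : T.Connected) {S : Set V} (hS1 : ∀ u, ¬ IsLeaf T u → u ∈ S)
    (a b : ↥S) :
    (T.induce S).Reachable a b ∧ (T.induce S).dist a b = T.dist a.val b.val := by
  obtain ⟨p, hp, hlen⟩ := hconn.exists_path_of_dist a.val b.val
  have hsub : ∀ c ∈ p.support, c ∈ S := by
    intro c hc
    by_cases h1 : c = a.val
    · exact h1 ▸ a.2
    by_cases h2 : c = b.val
    · exact h2 ▸ b.2
    exact hS1 c (path_support_not_leaf p hp hc h1 h2)
  obtain ⟨q, hq⟩ := lift_walk p a.2 b.2 hsub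
  have hreach : (T.induce S).Reachable a b := ⟨q⟩
  refine ⟨hreach, le_antisymm ?_ ?_⟩
  · calc (T.induce S).dist a b ≤ q.length := SimpleGraph.dist_le q
      _ = T.dist a.val b.val := by rw [hq, hlen]
  · obtain ⟨r, hr⟩ := hreach.exists_walk_length_eq_dist
    calc T.dist a.val b.val ≤ (r.map (induceVal T S)).length := SimpleGraph.dist_le _
      _ = (T.induce S).dist a b := by rw [Walk.length_map, hr]

end Aux

theorem gammaBk_twin_free {V : Type*} [Fintype V] (T : SimpleGraph V)
    (hT : T.IsTree) (hcard : 3 ≤ Fintype.card V) (S : Set V)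
    (hS1 : ∀ u, ¬ IsLeaf T u → u ∈ S)
    (hS2 : ∀ v, (∃ u, IsLeaf T u ∧ T.Adj u v) →
      ∃! u, IsLeaf T u ∧ T.Adj u v ∧ u ∈ S)
    (k : ℕ) (hk : 1 ≤ k) :
    gammaBk T k = gammaBk (T.induce S) k := by
  classical
  have hconn : T.Connected := hT.isConnected
  letI : Fintype ↥S := Fintype.ofFinite ↥S
  set σ : V → V := fun u => if h : IsLeaf T u then Exists.choose h else u with hσdef
  have hσ : ∀ u, IsLeaf T u → T.Adj u (σ u) ∧ ∀ y, T.Adj u y → y = σ u := by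
    intro u h
    simp only [hσdef, dif_pos h]
    exact Exists.choose_spec h
  clear_value σ
  have hleaf : ∀ u, u ∉ S → IsLeaf T u := by
    intro u hu
    by_contra h
    exact hu (hS1 u h)
  have hsup : ∀ u, IsLeaf T u → σ u ∈ S ∧ ¬ IsLeaf T (σ u) := by
    intro u h
    have hnl := support_not_leaf hconn hcard h (hσ u h).1
    exact ⟨hS1 _ hnl, hnl⟩
  have hAne : ({c : ℕ | ∃ f : V → ℕ, IsDomKBroadcast T k f ∧ ∑ᶠ v, f v = c}).Nonempty :=
    ⟨_, fun _ => k,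
      ⟨fun _ => le_rfl, fun u => ⟨u, hk, Reachable.refl u, by simp [SimpleGraph.dist_self]⟩⟩, rfl⟩
  have hBne : ({c : ℕ | ∃ f : ↥S → ℕ, IsDomKBroadcast (T.induce S) k f ∧ ∑ᶠ v, f v = c}).Nonempty :=
    ⟨_, fun _ => k,
      ⟨fun _ => le_rfl, fun u => ⟨u, hk, Reachable.refl u, by simp [SimpleGraph.dist_self]⟩⟩, rfl⟩
  apply le_antisymm
  · -- γ(T) ≤ γ(T*) : from an optimal broadcast g on T* build one on T
    obtain ⟨g, ⟨hgk, hgdom⟩, hgsum⟩ := Nat.sInf_mem hBne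
    clear hAne hBne
    refine le_trans ?_ (le_of_eq hgsum)
    clear hgsum
    set g' : V → ℕ := fun x => if h : x ∈ S then g ⟨x, h⟩ else 0 with hg'def
    have hg'S : ∀ (x : ↥S), g' x.val = g x := by
      intro x
      simp only [hg'def]
      rw [dif_pos x.2]
    set L : Finset V := Finset.univ.filter (fun u => u ∈ S ∧ IsLeaf T u) with hLdef
    set f : V → ℕ := fun v => if v ∈ S ∧ ¬ IsLeaf T v then
        min k (g' v + ∑ u ∈ L.filter (fun u => σ u = v), g' u) else 0 with hfdef
    clear_value g' L f
    have hfk : ∀ v, f v ≤ k := by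
      intro v
      simp only [hfdef]
      split
      · exact min_le_left _ _
      · exact Nat.zero_le k
    have hA1 : ∀ (w : ↥S), ¬ IsLeaf T w.val → g w ≤ f w.val := by
      intro w hnl
      have hfw : f w.val = min k (g' w.val + ∑ u ∈ L.filter (fun u => σ u = w.val), g' u) := by
        simp only [hfdef]
        rw [if_pos ⟨w.2, hnl⟩]
      rw [hfw]
      refine le_min (hgk w) ?_
      calc g w = g' w.val := (hg'S w).symm
        _ ≤ _ := Nat.le_add_right _ _
    have hA2 : ∀ (w : ↥S), IsLeaf T w.val → g w ≤ f (σ w.val) := by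
      intro w hl
      obtain ⟨hσS, hσnl⟩ := hsup _ hl
      have hmem : w.val ∈ L.filter (fun u => σ u = σ w.val) := by
        simp [hLdef, w.2, hl]
      have h1 : g' w.val ≤ ∑ u ∈ L.filter (fun u => σ u = σ w.val), g' u :=
        Finset.single_le_sum (fun i _ => Nat.zero_le _) hmem
      have h2 : f (σ w.val)
          = min k (g' (σ w.val) + ∑ u ∈ L.filter (fun u => σ u = σ w.val), g' u) := by
        simp only [hfdef]
        rw [if_pos ⟨hσS, hσnl⟩]
      rw [h2]
      refine le_min (hgk w) ?_
      calc g w = g' w.val := (hg'S w).symm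
        _ ≤ ∑ u ∈ L.filter (fun u => σ u = σ w.val), g' u := h1
        _ ≤ _ := Nat.le_add_left _ _
    have hsum_le : ∑ᶠ v, f v ≤ ∑ᶠ (v : ↥S), g v := by
      rw [finsum_eq_sum_of_fintype, finsum_eq_sum_of_fintype]
      have hstep1 : ∑ v : V, f v
          = ∑ v ∈ Finset.univ.filter (fun v => v ∈ S ∧ ¬ IsLeaf T v), f v := by
        rw [← Finset.sum_filter_add_sum_filter_not Finset.univ (fun v => v ∈ S ∧ ¬ IsLeaf T v) f]
        have hz : ∑ v ∈ Finset.univ.filter (fun v => ¬ (v ∈ S ∧ ¬ IsLeaf T v)), f v = 0 := by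
          apply Finset.sum_eq_zero
          intro v hv
          rw [Finset.mem_filter] at hv
          simp only [hfdef]
          rw [if_neg hv.2]
        rw [hz, add_zero]
      rw [hstep1]
      have hmaps : ∀ u ∈ L, σ u ∈ Finset.univ.filter (fun v => v ∈ S ∧ ¬ IsLeaf T v) := by
        intro u hu
        rw [hLdef, Finset.mem_filter] at hu
        obtain ⟨hS', hnl⟩ := hsup u hu.2.2
        simp [hS', hnl]
      calc ∑ v ∈ Finset.univ.filter (fun v => v ∈ S ∧ ¬ IsLeaf T v), f v
          ≤ ∑ v ∈ Finset.univ.filter (fun v => v ∈ S ∧ ¬ IsLeaf T v),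
              (g' v + ∑ u ∈ L.filter (fun u => σ u = v), g' u) := by
            apply Finset.sum_le_sum
            intro v hv
            rw [Finset.mem_filter] at hv
            simp only [hfdef]
            rw [if_pos hv.2]
            exact min_le_right _ _
        _ = ∑ v ∈ Finset.univ.filter (fun v => v ∈ S ∧ ¬ IsLeaf T v), g' v
              + ∑ v ∈ Finset.univ.filter (fun v => v ∈ S ∧ ¬ IsLeaf T v),
                  ∑ u ∈ L.filter (fun u => σ u = v), g' u := Finset.sum_add_distrib
        _ = ∑ v ∈ Finset.univ.filter (fun v => v ∈ S ∧ ¬ IsLeaf T v), g' v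
              + ∑ u ∈ L, g' u := by
            rw [Finset.sum_fiberwise_of_maps_to hmaps g']
        _ = ∑ v ∈ Finset.univ.filter (fun v => v ∈ S), g' v := by
            rw [← Finset.sum_filter_add_sum_filter_not
                  (Finset.univ.filter (fun v => v ∈ S)) (fun v => IsLeaf T v) g',
                Finset.filter_filter, Finset.filter_filter, hLdef, add_comm]
        _ = ∑ v : ↥S, g' v.val :=
            Finset.sum_subtype _ (by simp) g'
        _ = ∑ v : ↥S, g v := Finset.sum_congr rfl (fun x _ => hg'S x)
    have hfdomT : ∀ x, ∃ w, 1 ≤ f w ∧ T.Reachable x w ∧ T.dist x w ≤ f w := by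
      intro x
      by_cases hxS : x ∈ S
      · obtain ⟨w, hw1, hwr, hwd⟩ := hgdom ⟨x, hxS⟩
        rw [(induce_dist hconn hS1 ⟨x, hxS⟩ w).2] at hwd
        have hwd : T.dist x w.val ≤ g w := hwd
        by_cases hwl : IsLeaf T w.val
        · refine ⟨σ w.val, le_trans hw1 (hA2 w hwl), hconn.preconnected _ _, ?_⟩
          have hgf := hA2 w hwl
          by_cases hxw : x = w.val
          · have hd1 : T.dist x (σ w.val) = 1 := by
              rw [hxw]
              exact dist_eq_one_iff_adj.mpr (hσ _ hwl).1
            omega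
          · have hld := leaf_dist hconn hwl (hσ _ hwl).1 (w := x) hxw
            have hc1 : T.dist x w.val = T.dist w.val x := SimpleGraph.dist_comm ..
            have hc2 : T.dist x (σ w.val) = T.dist (σ w.val) x := SimpleGraph.dist_comm ..
            omega
        · refine ⟨w.val, le_trans hw1 (hA1 w hwl), hconn.preconnected _ _, ?_⟩
          exact le_trans hwd (hA1 w hwl)
      · have hlx := hleaf x hxS
        have hadjxv : T.Adj x (σ x) := (hσ x hlx).1
        obtain ⟨hvS, hvnl⟩ := hsup x hlx
        obtain ⟨u', ⟨hlu', hadju', hu'S⟩, -⟩ := hS2 (σ x) ⟨x, hlx, hadjxv⟩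
        obtain ⟨w, hw1, hwr, hwd⟩ := hgdom ⟨u', hu'S⟩
        rw [(induce_dist hconn hS1 ⟨u', hu'S⟩ w).2] at hwd
        have hwd : T.dist u' w.val ≤ g w := hwd
        have hσu' : σ u' = σ x := ((hσ u' hlu').2 (σ x) hadju').symm
        by_cases hwl : IsLeaf T w.val
        · obtain ⟨hsS, hsnl⟩ := hsup _ hwl
          refine ⟨σ w.val, le_trans hw1 (hA2 w hwl), hconn.preconnected _ _, ?_⟩
          have hgf := hA2 w hwl
          by_cases hwu : w.val = u'
          · have hsv : σ w.val = σ x := by rw [hwu, hσu']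
            have hd1 : T.dist x (σ w.val) = 1 := dist_eq_one_iff_adj.mpr (hsv ▸ hadjxv)
            omega
          · have h1 := leaf_dist hconn hwl (hσ _ hwl).1 (w := u') (fun h => hwu h.symm)
            have hsx : σ w.val ≠ x := fun h => hxS (h ▸ hsS)
            have hsu' : σ w.val ≠ u' := fun h => hsnl (h.symm ▸ hlu')
            have h2 := leaf_dist hconn hlx hadjxv (w := σ w.val) hsx
            have h3 := leaf_dist hconn hlu' hadju' (w := σ w.val) hsu'
            have hc1 : T.dist u' (σ w.val) = T.dist (σ w.val) u' := SimpleGraph.dist_comm ..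
            have hc2 : T.dist u' w.val = T.dist w.val u' := SimpleGraph.dist_comm ..
            omega
        · refine ⟨w.val, le_trans hw1 (hA1 w hwl), hconn.preconnected _ _, ?_⟩
          have hwx : w.val ≠ x := fun h => hxS (h ▸ w.2)
          have hwu' : w.val ≠ u' := fun h => hwl (h.symm ▸ hlu')
          have h1 := leaf_dist hconn hlx hadjxv (w := w.val) hwx
          have h2 := leaf_dist hconn hlu' hadju' (w := w.val) hwu'
          have := hA1 w hwl
          omega
    calc gammaBk T k ≤ ∑ᶠ v, f v := Nat.sInf_le ⟨f, ⟨hfk, hfdomT⟩, rfl⟩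
      _ ≤ ∑ᶠ (v : ↥S), g v := hsum_le
  · -- γ(T*) ≤ γ(T)
    obtain ⟨f, ⟨hfk, hfdom⟩, hfsum⟩ := Nat.sInf_mem hAne
    clear hAne hBne
    refine le_trans ?_ (le_of_eq hfsum)
    clear hfsum
    set F : Finset V := Finset.univ.filter (fun u => u ∉ S) with hFdef
    set g'' : V → ℕ := fun v =>
      min k (f v + ∑ u ∈ F.filter (fun u => σ u = v), f u) with hg''def
    set g : ↥S → ℕ := fun v => g'' v.val with hgdef
    clear_value F
    have hgk : ∀ v, g v ≤ k := fun v => min_le_left _ _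
    have hfg : ∀ (v : ↥S), f v.val ≤ g v := fun v => le_min (hfk _) (Nat.le_add_right _ _)
    have hfg2 : ∀ (u : V), u ∉ S → ∀ (hsS : σ u ∈ S), f u ≤ g ⟨σ u, hsS⟩ := by
      intro u hu hsS
      refine le_min (hfk u) ?_
      have hmem : u ∈ F.filter (fun x => σ x = σ u) := by simp [hFdef, hu]
      exact le_trans (Finset.single_le_sum (fun i _ => Nat.zero_le _) hmem)
        (Nat.le_add_left _ _)
    have hgdom : ∀ x : ↥S, ∃ w, 1 ≤ g w ∧ (T.induce S).Reachable x w ∧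
        (T.induce S).dist x w ≤ g w := by
      intro x
      obtain ⟨w, hw1, hwr, hwd⟩ := hfdom x.val
      by_cases hwS : w ∈ S
      · refine ⟨⟨w, hwS⟩, le_trans hw1 (hfg ⟨w, hwS⟩),
          (induce_dist hconn hS1 x ⟨w, hwS⟩).1, ?_⟩
        rw [(induce_dist hconn hS1 x ⟨w, hwS⟩).2]
        exact le_trans hwd (hfg ⟨w, hwS⟩)
      · have hlw := hleaf w hwS
        obtain ⟨hsS, hsnl⟩ := hsup w hlw
        refine ⟨⟨σ w, hsS⟩, le_trans hw1 (hfg2 w hwS hsS),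
          (induce_dist hconn hS1 x ⟨σ w, hsS⟩).1, ?_⟩
        rw [(induce_dist hconn hS1 x ⟨σ w, hsS⟩).2]
        show T.dist x.val (σ w) ≤ g ⟨σ w, hsS⟩
        have hxw : x.val ≠ w := fun h => hwS (h ▸ x.2)
        have h1 := leaf_dist hconn hlw (hσ w hlw).1 (w := x.val) hxw
        have hc1 : T.dist x.val w = T.dist w x.val := SimpleGraph.dist_comm ..
        have hc2 : T.dist x.val (σ w) = T.dist (σ w) x.val := SimpleGraph.dist_comm ..
        have := hfg2 w hwS hsS
        omega
    have hsum_le : ∑ᶠ (v : ↥S), g v ≤ ∑ᶠ v, f v := by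
      rw [finsum_eq_sum_of_fintype, finsum_eq_sum_of_fintype]
      have hmaps : ∀ u ∈ F, σ u ∈ Finset.univ.filter (fun v => v ∈ S) := by
        intro u hu
        rw [hFdef, Finset.mem_filter] at hu
        have := (hsup u (hleaf u hu.2)).1
        simp [this]
      calc ∑ v : ↥S, g v
          = ∑ v ∈ Finset.univ.filter (fun v => v ∈ S), g'' v :=
            (Finset.sum_subtype _ (by simp) g'').symm
        _ ≤ ∑ v ∈ Finset.univ.filter (fun v => v ∈ S),
              (f v + ∑ u ∈ F.filter (fun u => σ u = v), f u) :=
            Finset.sum_le_sum (fun v _ => min_le_right _ _)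
        _ = ∑ v ∈ Finset.univ.filter (fun v => v ∈ S), f v
              + ∑ v ∈ Finset.univ.filter (fun v => v ∈ S),
                  ∑ u ∈ F.filter (fun u => σ u = v), f u := Finset.sum_add_distrib
        _ = ∑ v ∈ Finset.univ.filter (fun v => v ∈ S), f v + ∑ u ∈ F, f u := by
            rw [Finset.sum_fiberwise_of_maps_to hmaps f]
        _ = ∑ v : V, f v := by
            rw [hFdef]
            exact Finset.sum_filter_add_sum_filter_not Finset.univ (fun v => v ∈ S) f
    calc gammaBk (T.induce S) k ≤ ∑ᶠ (v : ↥S), g v := Nat.sInf_le ⟨g, ⟨hgk, hgdom⟩, rfl⟩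
      _ ≤ ∑ᶠ v, f v := hsum_le
end

section
/- Let G be a finite connected graph and k ≥ 3 an integer. Then γ_{B_k}(G) = min{ γ_{B_k}(T) : T is a spanning tree of G }, i.e., there exists a spanning tree T of G with γ_{B_k}(T) = γ_{B_k}(G). -/
open SimpleGraph

/-- Arithmetic helper for the lexicographic encoding. -/
lemma key_arith {n a b x y : ℕ} (hy : y < n) (h : a * n + x ≤ b * n + y) : a ≤ b := by
  by_contra h'
  push_neg at h'
  have h2 : (b + 1) * n ≤ a * n := Nat.mul_le_mul_right _ h'
  rw [add_mul, one_mul] at h2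
  linarith

/-- The constant-`k` function is a dominating `k`-broadcast on any graph, so the
defining set of `gammaBk` is nonempty. -/
lemma bset_nonempty {V : Type*} (G : SimpleGraph V) {k : ℕ} (hk : 1 ≤ k) :
    {c : ℕ | ∃ f : V → ℕ, IsDomKBroadcast G k f ∧ ∑ᶠ v, f v = c}.Nonempty := by
  refine ⟨_, fun _ => k, ⟨fun v => le_rfl, fun u => ⟨u, hk, Reachable.refl u, ?_⟩⟩, rfl⟩
  rw [SimpleGraph.dist_self]
  exact Nat.zero_le k

/-- Monotonicity: a subgraph has a larger (or equal) broadcast number. -/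
lemma gammaBk_anti {V : Type*} {G T : SimpleGraph V} (hTG : T ≤ G) {k : ℕ} (hk : 1 ≤ k) :
    gammaBk G k ≤ gammaBk T k := by
  obtain ⟨f, hf, hsum⟩ := Nat.sInf_mem (bset_nonempty T hk)
  unfold gammaBk
  exact Nat.sInf_le ⟨f, ⟨hf.1, fun u => by
    obtain ⟨v, h1, h2, h3⟩ := hf.2 u
    exact ⟨v, h1, h2.mono hTG, le_trans (Reachable.dist_anti hTG h2) h3⟩⟩, hsum⟩

/-- Any acyclic subgraph of a finite connected graph extends to a spanning tree. -/
lemma exists_tree_between {V : Type*} [Fintype V] {G : SimpleGraph V} (hG : G.Connected)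
    {F : SimpleGraph V} (hFG : F ≤ G) (hF : F.IsAcyclic) :
    ∃ T : SimpleGraph V, F ≤ T ∧ T ≤ G ∧ T.IsTree := by
  classical
  suffices H : ∀ (m : ℕ) (F : SimpleGraph V), Nat.card F.ConnectedComponent ≤ m → F ≤ G →
      F.IsAcyclic → ∃ T : SimpleGraph V, F ≤ T ∧ T ≤ G ∧ T.IsTree from
    H _ F le_rfl hFG hF
  intro m
  induction m with
  | zero =>
    intro F hm _ _
    exfalso
    have hne : Nonempty F.ConnectedComponent := ⟨F.connectedComponentMk hG.nonempty.some⟩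
    have := Nat.card_pos (α := F.ConnectedComponent)
    omega
  | succ m ih =>
    intro F hm hFG hF
    by_cases hconn : F.Connected
    · exact ⟨F, le_rfl, hFG, ⟨hconn, hF⟩⟩
    · have hne : Nonempty V := hG.nonempty
      have hnp : ∃ a b : V, ¬ F.Reachable a b := by
        by_contra h
        push_neg at h
        exact hconn { preconnected := fun a b => h a b, nonempty := hne }
      obtain ⟨a₀, b₀, hab₀⟩ := hnp
      obtain ⟨w⟩ := hG.preconnected a₀ b₀
      -- find a G-edge whose endpoints are not F-reachable
      have cross : ∀ {x y : V}, G.Walk x y → ¬ F.Reachable x y →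
          ∃ a b, G.Adj a b ∧ ¬ F.Reachable a b := by
        intro x y w
        induction w with
        | nil => intro h; exact absurd (Reachable.refl _) h
        | @cons xx yy zz h q ih2 =>
          intro hr
          by_cases hxz : F.Reachable xx yy
          · exact ih2 (fun hzy => hr (hxz.trans hzy))
          · exact ⟨xx, yy, h, hxz⟩
      obtain ⟨a, b, hab, hnr⟩ := cross w hab₀
      have hne' : a ≠ b := fun h => hnr (h ▸ Reachable.refl a)
      set F' : SimpleGraph V := F ⊔ SimpleGraph.fromEdgeSet {s(a, b)} with hF'def
      have hFF' : F ≤ F' := le_sup_left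
      have hF'G : F' ≤ G := by
        refine sup_le hFG ?_
        intro x y hxy
        rw [fromEdgeSet_adj, Set.mem_singleton_iff, Sym2.eq_iff] at hxy
        rcases hxy.1 with ⟨rfl, rfl⟩ | ⟨rfl, rfl⟩
        · exact hab
        · exact hab.symm
      have hF'ab : F'.Adj a b := by
        rw [hF'def, sup_adj, fromEdgeSet_adj]
        exact Or.inr ⟨Set.mem_singleton _, hne'⟩
      have hF'a : F'.IsAcyclic := by
        intro v c hc
        by_cases he : s(a, b) ∈ c.edges
        · have hreach := (adj_and_reachable_delete_edges_iff_exists_cycle.mpr ⟨v, c, hc, he⟩).2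
          have hle : (F' \ SimpleGraph.fromEdgeSet {s(a, b)}) ≤ F := by
            intro x y hxy
            rw [sdiff_adj, hF'def, sup_adj] at hxy
            rcases hxy with ⟨hl | hr2, hnot⟩
            · exact hl
            · exact absurd hr2 hnot
          exact hnr (hreach.mono hle)
        · have hFe : ∀ e ∈ c.edges, e ∈ F.edgeSet := by
            intro e hece
            have h1 := c.edges_subset_edgeSet hece
            rw [hF'def, edgeSet_sup, edgeSet_fromEdgeSet] at h1
            rcases h1 with h1 | h2
            · exact h1
            · exact absurd (h2.1 ▸ hece) he
          exact hF (c.transfer F hFe) (hc.transfer hFe)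
      have hcard : Nat.card F'.ConnectedComponent < Nat.card F.ConnectedComponent := by
        haveI : Fintype F.ConnectedComponent := Fintype.ofFinite _
        haveI : Fintype F'.ConnectedComponent := Fintype.ofFinite _
        rw [Nat.card_eq_fintype_card, Nat.card_eq_fintype_card]
        refine Fintype.card_lt_of_surjective_not_injective
          (SimpleGraph.ConnectedComponent.map (SimpleGraph.Hom.ofLE hFF')) ?_ ?_
        · intro c'
          refine SimpleGraph.ConnectedComponent.ind (fun v => ⟨F.connectedComponentMk v, ?_⟩) c'
          rfl
        · intro hinj
          have h1 : SimpleGraph.ConnectedComponent.map (SimpleGraph.Hom.ofLE hFF')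
              (F.connectedComponentMk a) = SimpleGraph.ConnectedComponent.map
              (SimpleGraph.Hom.ofLE hFF') (F.connectedComponentMk b) := by
            simp only [SimpleGraph.ConnectedComponent.map_mk, SimpleGraph.Hom.coe_ofLE, id]
            exact SimpleGraph.ConnectedComponent.sound hF'ab.reachable
          have h2 := hinj h1
          rw [SimpleGraph.ConnectedComponent.eq] at h2
          exact hnr h2
      obtain ⟨T, h1, h2, h3⟩ := ih F' (by omega) hF'G hF'a
      exact ⟨T, le_trans hFF' h1, h2, h3⟩

theorem exists_spanning_tree_gammaBk_eq {V : Type*} [Fintype V] (G : SimpleGraph V)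
    (hG : G.Connected) (k : ℕ) (hk : 3 ≤ k) :
    ∃ T : SimpleGraph V, T ≤ G ∧ T.IsTree ∧ gammaBk T k = gammaBk G k := by
  classical
  have hk1 : 1 ≤ k := by omega
  -- an optimal dominating k-broadcast on G
  obtain ⟨f₀, hf₀, hsum'⟩ := Nat.sInf_mem (bset_nonempty G hk1)
  have hsum : ∑ᶠ v, f₀ v = gammaBk G k := hsum'
  clear hsum'
  obtain ⟨cost, hcost⟩ : ∃ cost : V → V → ℕ, ∀ u c, cost u c = G.dist u c + (k - f₀ c) :=
    ⟨_, fun _ _ => rfl⟩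
  obtain ⟨key, hkey⟩ : ∃ key : V → V → ℕ, ∀ u c,
      key u c = cost u c * Fintype.card V + ((Fintype.equivFin V) c : ℕ) :=
    ⟨_, fun _ _ => rfl⟩
  have hen : ∀ c : V, ((Fintype.equivFin V) c : ℕ) < Fintype.card V :=
    fun c => ((Fintype.equivFin V) c).2
  -- choose, for each u, a center minimizing key u
  have hcen : ∀ u : V, ∃ c : V, 1 ≤ f₀ c ∧ ∀ c', 1 ≤ f₀ c' → key u c ≤ key u c' := by
    intro u
    obtain ⟨v, hv1, _, _⟩ := hf₀.2 u
    have hne : (Finset.univ.filter (fun c => 1 ≤ f₀ c)).Nonempty :=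
      ⟨v, by simp [hv1]⟩
    obtain ⟨c, hc, hmin⟩ := Finset.exists_min_image _ (key u) hne
    exact ⟨c, (Finset.mem_filter.mp hc).2,
      fun c' h' => hmin c' (Finset.mem_filter.mpr ⟨Finset.mem_univ _, h'⟩)⟩
  choose cf hcf1 hcfmin using hcen
  have hcostmin : ∀ u c', 1 ≤ f₀ c' → cost u (cf u) ≤ cost u c' := by
    intro u c' h'
    have h := hcfmin u c' h'
    rw [hkey, hkey] at h
    exact key_arith (hen c') h
  -- the chosen center dominates u
  have hdom : ∀ u, G.dist u (cf u) ≤ f₀ (cf u) := by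
    intro u
    obtain ⟨v, hv1, _, hv3⟩ := hf₀.2 u
    have h1 : cost u (cf u) ≤ cost u v := hcostmin u v hv1
    have h2 : f₀ v ≤ k := hf₀.1 v
    have h3 : f₀ (cf u) ≤ k := hf₀.1 (cf u)
    rw [hcost, hcost] at h1
    omega
  -- existence of a neighbor strictly closer to a given vertex
  have hpar0 : ∀ u c : V, 0 < G.dist u c → ∃ w, G.Adj u w ∧ G.dist w c + 1 = G.dist u c := by
    intro u c hpos
    obtain ⟨wlk, hlen⟩ := hG.exists_walk_length_eq_dist u c
    cases wlk with
    | nil => rw [Walk.length_nil] at hlen; omega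
    | @cons _ x _ h q =>
      refine ⟨x, h, ?_⟩
      have hq : G.dist x c ≤ q.length := SimpleGraph.dist_le q
      have hlen' : q.length + 1 = G.dist u c := by
        rw [Walk.length_cons] at hlen; omega
      have htri : G.dist u c ≤ G.dist u x + G.dist x c := hG.dist_triangle
      have hadj : G.dist u x = 1 := dist_eq_one_iff_adj.mpr h
      omega
  have hpar : ∀ u, cf u ≠ u → ∃ w, G.Adj u w ∧ G.dist w (cf u) + 1 = G.dist u (cf u) := by
    intro u hu
    refine hpar0 u (cf u) ?_
    rcases Nat.eq_zero_or_pos (G.dist u (cf u)) with h | h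
    · exact absurd ((hG.dist_eq_zero_iff).mp h).symm hu
    · exact h
  -- the parent also preserves the chosen center (via the tie-breaking order)
  have hparent : ∀ u, cf u ≠ u →
      ∃ w, G.Adj u w ∧ G.dist w (cf u) + 1 = G.dist u (cf u) ∧ cf w = cf u := by
    intro u hu
    obtain ⟨w, hadj, hd⟩ := hpar u hu
    refine ⟨w, hadj, hd, ?_⟩
    have htri : ∀ c : V, G.dist u c ≤ G.dist w c + 1 := by
      intro c
      have h1 : G.dist u c ≤ G.dist u w + G.dist w c := hG.dist_triangle
      have h2 : G.dist u w = 1 := dist_eq_one_iff_adj.mpr hadj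
      omega
    have h1 : cost w (cf u) + 1 = cost u (cf u) := by
      rw [hcost, hcost]; omega
    have h2 : cost u (cf w) ≤ cost w (cf w) + 1 := by
      have := htri (cf w); rw [hcost, hcost]; omega
    have h3 : cost w (cf w) ≤ cost w (cf u) := hcostmin w (cf u) (hcf1 u)
    have h4 : cost u (cf u) ≤ cost u (cf w) := hcostmin u (cf w) (hcf1 w)
    have heq1 : cost u (cf w) = cost u (cf u) := by omega
    have heq2 : cost w (cf u) = cost w (cf w) := by omega
    have k1 : key u (cf u) ≤ key u (cf w) := hcfmin u (cf w) (hcf1 w)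
    have k2 : key w (cf w) ≤ key w (cf u) := hcfmin w (cf u) (hcf1 u)
    rw [hkey, hkey] at k1 k2
    rw [heq1] at k1
    rw [heq2] at k2
    have e1 : ((Fintype.equivFin V) (cf u) : ℕ) ≤ ((Fintype.equivFin V) (cf w) : ℕ) :=
      le_of_add_le_add_left k1
    have e2 : ((Fintype.equivFin V) (cf w) : ℕ) ≤ ((Fintype.equivFin V) (cf u) : ℕ) :=
      le_of_add_le_add_left k2
    have : (Fintype.equivFin V) (cf w) = (Fintype.equivFin V) (cf u) :=
      Fin.ext (le_antisymm e2 e1)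
    exact (Fintype.equivFin V).injective this
  -- the parent function
  obtain ⟨p, hpspec, hproot⟩ : ∃ p : V → V,
      (∀ u, cf u ≠ u →
        G.Adj u (p u) ∧ G.dist (p u) (cf u) + 1 = G.dist u (cf u) ∧ cf (p u) = cf u) ∧
      (∀ u, cf u = u → p u = u) := by
    refine ⟨fun u => if h : cf u = u then u else (hparent u h).choose,
      fun u h => ?_, fun u h => ?_⟩
    · simp only [dif_neg h]
      exact (hparent u h).choose_spec
    · simp only [dif_pos h]
  have hρp : ∀ u, cf u ≠ u → G.dist (p u) (cf (p u)) + 1 = G.dist u (cf u) := by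
    intro u h
    obtain ⟨_, hd, hcfp⟩ := hpspec u h
    rw [hcfp]
    exact hd
  have hρle : ∀ u, G.dist (p u) (cf (p u)) ≤ G.dist u (cf u) := by
    intro u
    by_cases h : cf u = u
    · rw [hproot u h]
    · have := hρp u h; omega
  -- the shortest-path forest
  obtain ⟨F, hFadj⟩ : ∃ F : SimpleGraph V, ∀ a b, F.Adj a b ↔
      a ≠ b ∧ ((cf a ≠ a ∧ p a = b) ∨ (cf b ≠ b ∧ p b = a)) :=
    ⟨SimpleGraph.fromRel (fun a b => cf a ≠ a ∧ p a = b),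
      fun a b => SimpleGraph.fromRel_adj _ a b⟩
  have hFG : F ≤ G := by
    intro a b hab
    rw [hFadj] at hab
    obtain ⟨hne, h | h⟩ := hab
    · exact h.2 ▸ (hpspec a h.1).1
    · exact (h.2 ▸ (hpspec b h.1).1).symm
  -- every F-edge is an F-bridge
  have hbridge : ∀ a b, cf a ≠ a → p a = b → F.IsBridge s(a, b) := by
    intro a b ha hab
    have hρab : G.dist b (cf b) + 1 = G.dist a (cf a) := hab ▸ hρp a ha
    have hne : a ≠ b := by
      intro h
      rw [← h] at hρab
      omega
    have hFab : F.Adj a b := by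
      rw [hFadj]
      exact ⟨hne, Or.inl ⟨ha, hab⟩⟩
    rw [isBridge_iff]
    rintro ⟨wlk⟩
    have orient : ∀ x y, cf x ≠ x → p x = y → s(x, y) ≠ s(a, b) →
        ((∃ m, p^[m] x = a) ↔ (∃ m, p^[m] y = a)) := by
      intro x y hx hxy hnexy
      constructor
      · rintro ⟨m, hm⟩
        cases m with
        | zero =>
          simp only [Function.iterate_zero, id] at hm
          subst hm
          exact absurd (by rw [← hxy, ← hab]) hnexy
        | succ m' =>
          exact ⟨m', by rw [← hm, Function.iterate_succ_apply, hxy]⟩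
      · rintro ⟨m, hm⟩
        exact ⟨m + 1, by rw [Function.iterate_succ_apply, hxy, hm]⟩
    have hstep : ∀ x y, F.Adj x y → s(x, y) ≠ s(a, b) →
        ((∃ m, p^[m] x = a) ↔ (∃ m, p^[m] y = a)) := by
      intro x y hxy hnexy
      rw [hFadj] at hxy
      obtain ⟨_, h | h⟩ := hxy
      · exact orient x y h.1 h.2 hnexy
      · exact (orient y x h.1 h.2 (by rwa [Sym2.eq_swap])).symm
    have hwalk : ∀ {x y : V}, (F \ SimpleGraph.fromEdgeSet {s(a, b)}).Walk x y →
        ((∃ m, p^[m] x = a) ↔ (∃ m, p^[m] y = a)) := by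
      intro x y w'
      induction w' with
      | nil => exact Iff.rfl
      | @cons x' y' z' h q ih =>
        rw [sdiff_adj] at h
        obtain ⟨hF1, hF2⟩ := h
        have hneq : s(x', y') ≠ s(a, b) := by
          intro hcontra
          exact hF2 (by rw [fromEdgeSet_adj]; exact ⟨by rw [hcontra]; rfl, hF1.ne⟩)
        exact (hstep _ _ hF1 hneq).trans ih
    have hSa : ∃ m, p^[m] a = a := ⟨0, rfl⟩
    have hSb : ¬ ∃ m, p^[m] b = a := by
      rintro ⟨m, hm⟩
      have hit : ∀ (m : ℕ) (u : V), G.dist (p^[m] u) (cf (p^[m] u)) ≤ G.dist u (cf u) := by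
        intro m
        induction m with
        | zero => intro u; simp
        | succ m' ih =>
          intro u
          rw [Function.iterate_succ_apply]
          exact (ih (p u)).trans (hρle u)
      have := hit m b
      rw [hm] at this
      omega
    exact hSb ((hwalk wlk).mp hSa)
  have hFacyclic : F.IsAcyclic := by
    rw [isAcyclic_iff_forall_adj_isBridge]
    intro x y hxy
    have h' := hxy
    rw [hFadj] at h'
    obtain ⟨_, h | h⟩ := h'
    · exact hbridge x y h.1 h.2
    · rw [Sym2.eq_swap]
      exact hbridge y x h.1 h.2
  -- extend the forest to a spanning tree
  obtain ⟨T, hFT, hTG, hTree⟩ := exists_tree_between hG hFG hFacyclic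
  refine ⟨T, hTG, hTree, ?_⟩
  -- in F (hence in T) each vertex has a short walk to its center
  have hwalkF : ∀ u : V, ∃ w : F.Walk u (cf u), w.length ≤ G.dist u (cf u) := by
    have key' : ∀ (m : ℕ) (u : V), G.dist u (cf u) ≤ m →
        ∃ w : F.Walk u (cf u), w.length ≤ G.dist u (cf u) := by
      intro m
      induction m with
      | zero =>
        intro u hu
        have h0 : cf u = u := ((hG.dist_eq_zero_iff).mp (Nat.le_zero.mp hu)).symm
        exact ⟨(Walk.nil : F.Walk u u).copy rfl h0.symm, by simp⟩
      | succ m ih =>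
        intro u hu
        by_cases h : cf u = u
        · exact ⟨(Walk.nil : F.Walk u u).copy rfl h.symm, by simp⟩
        · obtain ⟨hadj, hd, hcfp⟩ := hpspec u h
          have hρpu : G.dist (p u) (cf (p u)) + 1 = G.dist u (cf u) := hρp u h
          have hneu : u ≠ p u := by
            intro heq
            rw [← heq] at hρpu
            omega
          have hFadj' : F.Adj u (p u) := by
            rw [hFadj]
            exact ⟨hneu, Or.inl ⟨h, rfl⟩⟩
          obtain ⟨w', hw'⟩ := ih (p u) (by omega)
          refine ⟨Walk.cons hFadj' (w'.copy rfl hcfp), ?_⟩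
          rw [Walk.length_cons, Walk.length_copy]
          omega
    exact fun u => key' (G.dist u (cf u)) u le_rfl
  -- f₀ is a dominating k-broadcast on T
  have hbT : IsDomKBroadcast T k f₀ := by
    refine ⟨hf₀.1, fun u => ?_⟩
    obtain ⟨w, hw⟩ := hwalkF u
    refine ⟨cf u, hcf1 u, ⟨w.mapLe hFT⟩, ?_⟩
    have h1 : T.dist u (cf u) ≤ (w.mapLe hFT).length := SimpleGraph.dist_le _
    have h2 : (w.mapLe hFT).length = w.length := by simp [Walk.mapLe]
    have h3 : G.dist u (cf u) ≤ f₀ (cf u) := hdom u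
    omega
  have h1 : gammaBk T k ≤ gammaBk G k := by
    have hmem : (∑ᶠ v, f₀ v) ∈ {c : ℕ | ∃ f : V → ℕ, IsDomKBroadcast T k f ∧ ∑ᶠ v, f v = c} :=
      ⟨f₀, hbT, rfl⟩
    have h := Nat.sInf_le hmem
    rw [hsum] at h
    exact h
  have h2 : gammaBk G k ≤ gammaBk T k := gammaBk_anti hTG hk1
  exact le_antisymm h1 h2
end

section
/- For every integer k ≥ 3, there exists a tree T with rad(T) > k whose dominating k-broadcast number equals ⌈ ((k+2)/(k+1)) · (|V(T)|/3) ⌉; namely the tree T_k obtained from a path u₁...u_{2k+1} by attaching leaves to u₁, u_{2k+1}, and all u_i with even i, which satisfies γ_{B_k}(T_k) = k+2. -/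
/-- The index (0-based) of the path vertex to which the `j`-th pendant leaf is attached:
leaf `0` to `u₁`, leaf `k+1` to `u_{2k+1}`, and leaf `j` (for `1 ≤ j ≤ k`)
to the even-indexed (1-based) vertex `u_{2j}`. -/
def attachIdx (k : ℕ) (j : Fin (k + 2)) : ℕ :=
  if (j : ℕ) = 0 then 0 else if (j : ℕ) = k + 1 then 2 * k else 2 * (j : ℕ) - 1

/-- The tree `T_k`: a path `u₁ u₂ … u_{2k+1}` (here `Sum.inl i` is `u_{i+1}`)
with a pendant leaf attached to `u₁`, to `u_{2k+1}`, and to each `u_i` with `i` even. -/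
def Tk (k : ℕ) : SimpleGraph (Fin (2 * k + 1) ⊕ Fin (k + 2)) :=
  SimpleGraph.fromRel (fun x y =>
    match x, y with
    | Sum.inl i, Sum.inl j => (i : ℕ) + 1 = (j : ℕ)
    | Sum.inr j, Sum.inl i => (i : ℕ) = attachIdx k j
    | _, _ => False)

namespace TkAux
open SimpleGraph Sum

variable {k : ℕ}

def phi : Fin (2 * k + 1) ⊕ Fin (k + 2) → ℕ := Sum.elim (fun i => (i : ℕ)) (fun j => attachIdx k j)
def eps : Fin (2 * k + 1) ⊕ Fin (k + 2) → ℕ := Sum.elim (fun _ => 0) (fun _ => 1)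
def natd (a b : ℕ) : ℕ := (a - b) + (b - a)
def D (x y : Fin (2 * k + 1) ⊕ Fin (k + 2)) : ℕ :=
  if x = y then 0 else natd (phi x) (phi y) + eps x + eps y

lemma attachIdx_le (j : Fin (k + 2)) : attachIdx k j ≤ 2 * k := by
  have := j.isLt
  unfold attachIdx; split_ifs <;> omega

lemma phi_le (x : Fin (2 * k + 1) ⊕ Fin (k + 2)) : phi x ≤ 2 * k := by
  cases x with
  | inl i => have := i.isLt; simpa [phi] using by omega
  | inr j => simpa [phi] using attachIdx_le j

lemma eps_le (x : Fin (2 * k + 1) ⊕ Fin (k + 2)) : eps x ≤ 1 := by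
  cases x <;> simp [eps]

lemma adj_elim {x y : Fin (2 * k + 1) ⊕ Fin (k + 2)} (h : (Tk k).Adj x y) :
    (phi x = phi y ∧ eps x + eps y = 1) ∨ (natd (phi x) (phi y) = 1 ∧ eps x = 0 ∧ eps y = 0) := by
  rw [Tk, SimpleGraph.fromRel_adj] at h
  obtain ⟨hne, h⟩ := h
  cases x with
  | inl i => cases y with
    | inl i' =>
      refine Or.inr ⟨?_, rfl, rfl⟩
      simp only at h
      simp only [natd, phi, Sum.elim_inl]
      have : i ≠ i' := fun hh => hne (by rw [hh])
      have : (i : ℕ) ≠ (i' : ℕ) := fun hh => this (Fin.ext hh)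
      omega
    | inr j =>
      refine Or.inl ⟨?_, rfl⟩
      simp only at h
      rcases h with h | h
      · exact h.elim
      · simp [phi, h]
  | inr j => cases y with
    | inl i' =>
      refine Or.inl ⟨?_, rfl⟩
      simp only at h
      rcases h with h | h
      · simp [phi, h]
      · exact h.elim
    | inr j' =>
      exfalso
      simp only at h
      rcases h with h | h <;> exact h

lemma natd_triangle (a b c : ℕ) : natd a c ≤ natd a b + natd b c := by
  simp [natd]; omega

lemma D_lipschitz {x x' y : Fin (2 * k + 1) ⊕ Fin (k + 2)} (h : (Tk k).Adj x x') :
    D x y ≤ D x' y + 1 := by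
  by_cases hxy : x = y
  · simp [D, hxy]
  by_cases hx'y : x' = y
  · subst hx'y
    simp only [D, if_neg hxy, if_pos rfl]
    rcases adj_elim h with ⟨h1, h2⟩ | ⟨h1, h2, h3⟩
    · simp [h1, natd]; omega
    · omega
  · simp only [D, if_neg hxy, if_neg hx'y]
    rcases adj_elim h with ⟨h1, h2⟩ | ⟨h1, h2, h3⟩
    · rw [h1]
      have := eps_le x; have := eps_le x'
      omega
    · have := natd_triangle (phi x) (phi x') (phi y)
      omega

lemma D_le_length {x y : Fin (2 * k + 1) ⊕ Fin (k + 2)} (p : (Tk k).Walk x y) :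
    D x y ≤ p.length := by
  induction p with
  | nil => simp [D]
  | cons h p ih =>
    rw [SimpleGraph.Walk.length_cons]
    exact le_trans (D_lipschitz h) (by omega)

lemma adj_path {i i' : Fin (2 * k + 1)} (h : (i : ℕ) + 1 = (i' : ℕ)) :
    (Tk k).Adj (inl i) (inl i') := by
  rw [Tk, SimpleGraph.fromRel_adj]
  refine ⟨fun hh => ?_, Or.inl h⟩
  · rw [Sum.inl.injEq] at hh
    rw [hh] at h; omega

lemma adj_leaf (j : Fin (k + 2)) (i : Fin (2 * k + 1)) (h : (i : ℕ) = attachIdx k j) :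
    (Tk k).Adj (inr j) (inl i) := by
  rw [Tk, SimpleGraph.fromRel_adj]
  exact ⟨by simp, Or.inl h⟩

lemma inl_eq {a b : ℕ} (ha : a < 2 * k + 1) (hb : b < 2 * k + 1) (h : a = b) :
    (inl ⟨a, ha⟩ : Fin (2 * k + 1) ⊕ Fin (k + 2)) = inl ⟨b, hb⟩ := by subst h; rfl

/-- walk along the path from i to i + d -/
lemma exists_walk_path : ∀ (d i : ℕ) (h : i + d ≤ 2 * k),
    ∃ p : (Tk k).Walk (inl ⟨i, by omega⟩) (inl ⟨i + d, by omega⟩), p.length = d := by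
  intro d
  induction d with
  | zero => intro i h; exact ⟨SimpleGraph.Walk.nil.copy rfl (inl_eq _ _ (by omega)), by simp⟩
  | succ d ih =>
    intro i h
    obtain ⟨p, hp⟩ := ih (i + 1) (by omega)
    refine ⟨(SimpleGraph.Walk.cons (adj_path (by simp)) p).copy rfl (inl_eq _ _ (by omega)), ?_⟩
    simp [hp]

lemma exists_walk_inl (i i' : Fin (2 * k + 1)) :
    ∃ p : (Tk k).Walk (inl i) (inl i'), p.length = natd (i : ℕ) (i' : ℕ) := by
  rcases le_total (i : ℕ) (i' : ℕ) with h | h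
  · obtain ⟨p, hp⟩ := exists_walk_path (k := k) ((i' : ℕ) - i) i (by omega)
    refine ⟨p.copy (congrArg inl (Fin.eta i i.isLt))
      (congrArg inl (Fin.ext (show (↑i:ℕ) + (↑i' - ↑i) = ↑i' by omega))), ?_⟩
    simp [hp, natd]; omega
  · obtain ⟨p, hp⟩ := exists_walk_path (k := k) ((i : ℕ) - i') i' (by omega)
    refine ⟨(p.copy (congrArg inl (Fin.eta i' i'.isLt))
      (congrArg inl (Fin.ext (show (↑i':ℕ) + (↑i - ↑i') = ↑i by omega)))).reverse, ?_⟩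
    simp [hp, natd]; omega

lemma attach_lt (j : Fin (k + 2)) : attachIdx k j < 2 * k + 1 := by
  have := attachIdx_le (k := k) j; omega

lemma exists_walk_D (x y : Fin (2 * k + 1) ⊕ Fin (k + 2)) :
    ∃ p : (Tk k).Walk x y, p.length = D x y := by
  cases x with
  | inl i => cases y with
    | inl i' =>
      obtain ⟨p, hp⟩ := exists_walk_inl i i'
      refine ⟨p, hp.trans ?_⟩
      by_cases h : i = i'
      · simp [D, h, natd]
      · have hne : (inl i : Fin (2 * k + 1) ⊕ Fin (k + 2)) ≠ inl i' := by
          simp [h]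
        simp [D, hne, eps, phi]
    | inr j =>
      obtain ⟨p, hp⟩ := exists_walk_inl (k := k) i ⟨attachIdx k j, attach_lt j⟩
      refine ⟨p.concat ((adj_leaf j _ rfl).symm), ?_⟩
      rw [SimpleGraph.Walk.length_concat, hp]
      simp [D, phi, eps]
  | inr j => cases y with
    | inl i' =>
      obtain ⟨p, hp⟩ := exists_walk_inl (k := k) ⟨attachIdx k j, attach_lt j⟩ i'
      refine ⟨SimpleGraph.Walk.cons (adj_leaf j _ rfl) p, ?_⟩
      rw [SimpleGraph.Walk.length_cons, hp]
      simp [D, phi, eps]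
    | inr j' =>
      by_cases h : j = j'
      · subst h; exact ⟨SimpleGraph.Walk.nil, by simp [D]⟩
      · obtain ⟨p, hp⟩ := exists_walk_inl (k := k) ⟨attachIdx k j, attach_lt j⟩ ⟨attachIdx k j', attach_lt j'⟩
        refine ⟨SimpleGraph.Walk.cons (adj_leaf j _ rfl) (p.concat ((adj_leaf j' _ rfl).symm)), ?_⟩
        rw [SimpleGraph.Walk.length_cons, SimpleGraph.Walk.length_concat, hp]
        have hne : (inr j : Fin (2 * k + 1) ⊕ Fin (k + 2)) ≠ inr j' := by
          simp [h]
        simp [D, hne, eps, phi]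

lemma reach (x y : Fin (2 * k + 1) ⊕ Fin (k + 2)) : (Tk k).Reachable x y :=
  ⟨(exists_walk_D x y).choose⟩

lemma dist_eq (x y : Fin (2 * k + 1) ⊕ Fin (k + 2)) : (Tk k).dist x y = D x y := by
  obtain ⟨p, hp⟩ := exists_walk_D (k := k) x y
  refine le_antisymm (hp ▸ SimpleGraph.dist_le p) ?_
  obtain ⟨q, hq⟩ := (reach x y).exists_walk_length_eq_dist
  exact hq ▸ D_le_length q

lemma D_le (x y : Fin (2 * k + 1) ⊕ Fin (k + 2)) :
    D x y ≤ natd (phi x) (phi y) + eps x + eps y := by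
  unfold D; split_ifs <;> omega

lemma grad_gt : k < grad (Tk k) := by
  unfold grad
  have hne : {e : ℕ | ∃ v : Fin (2 * k + 1) ⊕ Fin (k + 2), ∀ u, (Tk k).dist v u ≤ e}.Nonempty := by
    refine ⟨2 * k + 2, inl ⟨0, by omega⟩, fun u => ?_⟩
    rw [dist_eq]
    have h1 := D_le (k := k) (inl ⟨0, by omega⟩) u
    have h2 := phi_le u
    have h3 := eps_le u
    have : phi (k := k) (inl ⟨0, by omega⟩) = 0 := rfl
    have : eps (k := k) (inl ⟨0, by omega⟩) = 0 := rfl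
    simp only [natd] at h1
    omega
  have hmem := Nat.sInf_mem hne
  obtain ⟨v, hv⟩ := hmem
  set u1 : Fin (2 * k + 1) ⊕ Fin (k + 2) := inr ⟨0, by omega⟩ with hu1
  set u2 : Fin (2 * k + 1) ⊕ Fin (k + 2) := inr ⟨k + 1, by omega⟩ with hu2
  have ha1 : phi (k := k) u1 = 0 := by simp [hu1, phi, attachIdx]
  have ha2 : phi (k := k) u2 = 2 * k := by simp [hu2, phi, attachIdx]
  have he1 : eps (k := k) u1 = 1 := rfl
  have he2 : eps (k := k) u2 = 1 := rfl
  have hne12 : u1 ≠ u2 := by simp [hu1, hu2, Fin.ext_iff]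
  have key : 2 * k + 2 ≤ D (k := k) v u1 + D v u2 := by
    by_cases h1 : v = u1
    · rw [h1]
      simp only [D, if_pos rfl, if_neg hne12, ha1, ha2, he1, he2, natd]
      omega
    · by_cases h2 : v = u2
      · rw [h2]
        simp only [D, if_pos rfl, if_neg (Ne.symm hne12), ha1, ha2, he1, he2, natd]
        omega
      · have hp := phi_le (k := k) v
        simp only [D, if_neg h1, if_neg h2, ha1, ha2, he1, he2, natd]
        omega
  have d1 := hv u1
  have d2 := hv u2
  rw [dist_eq] at d1 d2
  omega

lemma upper (hk : 3 ≤ k) : ∃ f : (Fin (2 * k + 1) ⊕ Fin (k + 2)) → ℕ,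
    ((∀ v, f v ≤ k) ∧ ∀ u, ∃ v, 1 ≤ f v ∧ (Tk k).Reachable u v ∧ (Tk k).dist u v ≤ f v) ∧
    ∑ᶠ v, f v = k + 2 := by
  set v1 : Fin (2 * k + 1) ⊕ Fin (k + 2) := inl ⟨k - 1, by omega⟩ with hv1
  set v2 : Fin (2 * k + 1) ⊕ Fin (k + 2) := inl ⟨2 * k - 1, by omega⟩ with hv2
  have hne : v1 ≠ v2 := by simp [hv1, hv2, Fin.ext_iff]; omega
  refine ⟨fun x => if x = v1 then k else if x = v2 then 2 else 0, ⟨fun v => ?_, fun u => ?_⟩, ?_⟩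
  · dsimp only; split_ifs <;> omega
  · have hp := phi_le (k := k) u
    have he := eps_le (k := k) u
    have hp1 : phi (k := k) v1 = k - 1 := rfl
    have hp2 : phi (k := k) v2 = 2 * k - 1 := rfl
    have he1 : eps (k := k) v1 = 0 := rfl
    have he2 : eps (k := k) v2 = 0 := rfl
    by_cases hc : phi (k := k) u + 2 ≤ 2 * k
    · refine ⟨v1, ?_, reach u v1, ?_⟩
      · show 1 ≤ if v1 = v1 then k else if v1 = v2 then 2 else 0
        rw [if_pos rfl]; omega
      · show (Tk k).dist u v1 ≤ if v1 = v1 then k else if v1 = v2 then 2 else 0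
        rw [if_pos rfl, dist_eq]
        have h5 := D_le (k := k) u v1
        rw [hp1, he1] at h5
        simp only [natd] at h5
        omega
    · refine ⟨v2, ?_, reach u v2, ?_⟩
      · show 1 ≤ if v2 = v1 then k else if v2 = v2 then 2 else 0
        rw [if_neg (Ne.symm hne), if_pos rfl]; omega
      · show (Tk k).dist u v2 ≤ if v2 = v1 then k else if v2 = v2 then 2 else 0
        rw [if_neg (Ne.symm hne), if_pos rfl, dist_eq]
        have h5 := D_le (k := k) u v2
        rw [hp2, he2] at h5
        simp only [natd] at h5
        omega
  · rw [finsum_eq_sum_of_fintype]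
    have hsplit : ∀ x, (if x = v1 then k else if x = v2 then 2 else 0) =
        (if x = v1 then k else 0) + (if x = v2 then 2 else 0) := by
      intro x
      split_ifs with h1 h2 <;> first | omega | (exact absurd (h1.symm.trans h2) hne)
    rw [Finset.sum_congr rfl fun x _ => hsplit x, Finset.sum_add_distrib,
      Finset.sum_ite_eq', Finset.sum_ite_eq']
    simp

lemma gap (j0 j1 : Fin (k + 2)) (hle : (j0 : ℕ) ≤ (j1 : ℕ))
    (hnot : ¬((j0 : ℕ) = 0 ∧ (j1 : ℕ) = k + 1)) :
    2 * ((j1 : ℕ) - (j0 : ℕ)) ≤ natd (attachIdx k j1) (attachIdx k j0) + 1 := by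
  have hb0 := j0.isLt
  have hb1 := j1.isLt
  unfold attachIdx natd
  split_ifs <;> omega

lemma count_le (r p : ℕ) (hr : r + 1 ≤ k) :
    (Finset.univ.filter fun j : Fin (k + 2) => natd (attachIdx k j) p ≤ r).card ≤ r + 1 := by
  set S := Finset.univ.filter fun j : Fin (k + 2) => natd (attachIdx k j) p ≤ r with hS
  rcases S.eq_empty_or_nonempty with h | h
  · simp [h]
  · set j0 := S.min' h with hj0
    set j1 := S.max' h with hj1
    have h0 : j0 ∈ S := S.min'_mem h
    have h1 : j1 ∈ S := S.max'_mem h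
    rw [hS, Finset.mem_filter] at h0 h1
    have hle : (j0 : ℕ) ≤ (j1 : ℕ) := S.min'_le j1 (S.max'_mem h)
    have hsub : S ⊆ Finset.Icc j0 j1 :=
      fun x hx => Finset.mem_Icc.mpr ⟨S.min'_le x hx, S.le_max' x hx⟩
    have hcard : S.card ≤ (j1 : ℕ) + 1 - (j0 : ℕ) := by
      have := Finset.card_le_card hsub
      rwa [Fin.card_Icc] at this
    by_cases hext : (j0 : ℕ) = 0 ∧ (j1 : ℕ) = k + 1
    · exfalso
      have ha0 : attachIdx k j0 = 0 := by unfold attachIdx; rw [if_pos hext.1]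
      have ha1 : attachIdx k j1 = 2 * k := by
        unfold attachIdx; rw [if_neg (by omega), if_pos hext.2]
      rw [ha0] at h0; rw [ha1] at h1
      simp only [natd] at h0 h1
      omega
    · have hg := gap j0 j1 hle hext
      have ht := natd_triangle (attachIdx k j1) p (attachIdx k j0)
      have hsymm : natd p (attachIdx k j0) = natd (attachIdx k j0) p := by
        simp only [natd]; omega
      rw [hsymm] at ht
      omega

lemma ball_count (v : Fin (2 * k + 1) ⊕ Fin (k + 2)) (t : ℕ) (ht1 : 1 ≤ t) (htk : t ≤ k) :
    (Finset.univ.filter fun j : Fin (k + 2) => D (inr j) v ≤ t).card ≤ t := by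
  cases v with
  | inl i =>
    have hsub : (Finset.univ.filter fun j : Fin (k + 2) => D (inr j) (inl i) ≤ t) ⊆
        Finset.univ.filter fun j : Fin (k + 2) => natd (attachIdx k j) (i : ℕ) ≤ t - 1 := by
      intro j hj
      rw [Finset.mem_filter] at hj ⊢
      refine ⟨Finset.mem_univ _, ?_⟩
      have hD : D (k := k) (inr j) (inl i) =
          natd (attachIdx k j) (i : ℕ) + 1 := by
        simp [D, phi, eps]
      omega
    calc _ ≤ _ := Finset.card_le_card hsub
      _ ≤ (t - 1) + 1 := count_le (t - 1) _ (by omega)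
      _ = t := by omega
  | inr jv =>
    by_cases ht2 : t = 1
    · subst ht2
      have hsub : (Finset.univ.filter fun j : Fin (k + 2) => D (inr j) (inr jv) ≤ 1) ⊆ {jv} := by
        intro j hj
        rw [Finset.mem_filter] at hj
        rw [Finset.mem_singleton]
        by_contra hne
        have hne' : (inr j : Fin (2 * k + 1) ⊕ Fin (k + 2)) ≠ inr jv := by simp [hne]
        have : D (k := k) (inr j) (inr jv) =
            natd (attachIdx k j) (attachIdx k jv) + 2 := by
          simp only [D, if_neg hne', phi, eps, Sum.elim_inr]
        omega
      exact le_trans (Finset.card_le_card hsub) (by simp)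
    · have hsub : (Finset.univ.filter fun j : Fin (k + 2) => D (inr j) (inr jv) ≤ t) ⊆
          insert jv (Finset.univ.filter fun j : Fin (k + 2) =>
            natd (attachIdx k j) (attachIdx k jv) ≤ t - 2) := by
        intro j hj
        rw [Finset.mem_filter] at hj
        rw [Finset.mem_insert]
        by_cases hne : j = jv
        · exact Or.inl hne
        · refine Or.inr ?_
          rw [Finset.mem_filter]
          refine ⟨Finset.mem_univ _, ?_⟩
          have hne' : (inr j : Fin (2 * k + 1) ⊕ Fin (k + 2)) ≠ inr jv := by simp [hne]
          have : D (k := k) (inr j) (inr jv) =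
              natd (attachIdx k j) (attachIdx k jv) + 2 := by
            simp only [D, if_neg hne', phi, eps, Sum.elim_inr]
          omega
      calc _ ≤ _ := Finset.card_le_card hsub
        _ ≤ 1 + ((t - 2) + 1) := by
            refine le_trans (Finset.card_insert_le _ _) ?_
            have := count_le (k := k) (t - 2) (attachIdx k jv) (by omega)
            omega
        _ ≤ t := by omega

lemma lower (f : (Fin (2 * k + 1) ⊕ Fin (k + 2)) → ℕ)
    (hub : ∀ v, f v ≤ k)
    (hdom : ∀ u, ∃ v, 1 ≤ f v ∧ (Tk k).Reachable u v ∧ (Tk k).dist u v ≤ f v) :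
    k + 2 ≤ ∑ᶠ v, f v := by
  choose g h1 h2 h3 using hdom
  have hcard : (Finset.univ : Finset (Fin (k + 2))).card =
      ∑ v ∈ Finset.univ, (Finset.univ.filter fun j : Fin (k + 2) => g (inr j) = v).card :=
    Finset.card_eq_sum_card_fiberwise (fun x _ => Finset.mem_univ _)
  have hfib : ∀ v, (Finset.univ.filter fun j : Fin (k + 2) => g (inr j) = v).card ≤ f v := by
    intro v
    by_cases hv : f v = 0
    · rw [Finset.card_eq_zero.mpr, hv]
      rw [Finset.eq_empty_iff_forall_notMem]
      intro j hj
      rw [Finset.mem_filter] at hj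
      have := h1 (inr j)
      rw [hj.2] at this
      omega
    · have ht1 : 1 ≤ f v := by omega
      have hsub : (Finset.univ.filter fun j : Fin (k + 2) => g (inr j) = v) ⊆
          Finset.univ.filter fun j : Fin (k + 2) => D (inr j) v ≤ f v := by
        intro j hj
        rw [Finset.mem_filter] at hj ⊢
        refine ⟨Finset.mem_univ _, ?_⟩
        have := h3 (inr j)
        rw [hj.2, dist_eq] at this
        exact this
      exact le_trans (Finset.card_le_card hsub) (ball_count v (f v) ht1 (hub v))
  have : (k + 2 : ℕ) = (Finset.univ : Finset (Fin (k + 2))).card := by simp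
  rw [finsum_eq_sum_of_fintype]
  calc k + 2 = _ := this
    _ = _ := hcard
    _ ≤ ∑ v ∈ Finset.univ, f v := Finset.sum_le_sum (fun v _ => hfib v)

end TkAux

theorem Tk_attains_bound (k : ℕ) (hk : 3 ≤ k) :
    k < grad (Tk k) ∧
    (gammaBk (Tk k) k : ℤ) =
      ⌈((k : ℚ) + 2) / ((k : ℚ) + 1) *
        ((Fintype.card (Fin (2 * k + 1) ⊕ Fin (k + 2)) : ℚ) / 3)⌉ ∧
    gammaBk (Tk k) k = k + 2 := by
  obtain ⟨f0, hf0, hsum0⟩ := TkAux.upper (k := k) hk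
  have h3 : gammaBk (Tk k) k = k + 2 := by
    unfold gammaBk
    apply le_antisymm
    · exact Nat.sInf_le ⟨f0, hf0, hsum0⟩
    · refine le_csInf ⟨k + 2, f0, hf0, hsum0⟩ ?_
      rintro c ⟨f, ⟨hub, hdom⟩, rfl⟩
      exact TkAux.lower f hub hdom
  refine ⟨TkAux.grad_gt, ?_, h3⟩
  rw [h3]
  have hcard : ((Fintype.card (Fin (2 * k + 1) ⊕ Fin (k + 2)) : ℚ)) = 3 * (k : ℚ) + 3 := by
    simp [Fintype.card_sum]
    ring
  rw [hcard]
  have hval : ((k : ℚ) + 2) / ((k : ℚ) + 1) * ((3 * (k : ℚ) + 3) / 3) = (k : ℚ) + 2 := by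
    have h : (k : ℚ) + 1 ≠ 0 := by positivity
    rw [show (3 * (k : ℚ) + 3) / 3 = (k : ℚ) + 1 from by ring, div_mul_cancel₀ _ h]
  rw [hval, show ((k : ℚ) + 2) = ((k + 2 : ℕ) : ℚ) by push_cast; ring, Int.ceil_natCast]
end

section
/- Let G be a finite connected graph and k ≥ 1 an integer. If f is a dominating k-broadcast on G assigning positive value to a leaf u with support vertex v, then the function g defined by g(u) = 0, g(v) = max(f(u), f(v)), and g(w) = f(w) otherwise, is a dominating k-broadcast on G with cost ω(g) ≤ ω(f). -/
/-- Any vertex other than the leaf `u` is strictly closer to the support `v`. -/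
lemma dist_support_lt {V : Type*} (G : SimpleGraph V) (hG : G.Connected)
    (u v : V) (hleaf : IsLeaf G u) (hsupp : G.Adj u v)
    (x : V) (hx : x ≠ u) : G.dist x v + 1 ≤ G.dist x u := by
  obtain ⟨p, hp⟩ := hG.exists_walk_length_eq_dist x u
  cases hq : p.reverse with
  | nil => exact absurd rfl hx
  | cons h q =>
    rename_i w
    have hwv : w = v := hleaf.unique h hsupp
    have hlen : q.length + 1 = p.length := by
      have h1 := congrArg SimpleGraph.Walk.length hq
      rw [SimpleGraph.Walk.length_reverse] at h1
      simpa [Nat.add_comm] using h1.symm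
    have hdq : G.dist x w ≤ q.reverse.length := SimpleGraph.dist_le q.reverse
    rw [SimpleGraph.Walk.length_reverse] at hdq
    have hdd : G.dist x v = G.dist x w := by rw [hwv]
    omega

theorem move_broadcast_off_leaf {V : Type*} [Fintype V] [DecidableEq V]
    (G : SimpleGraph V) (hG : G.Connected) (k : ℕ) (hk : 1 ≤ k)
    (f : V → ℕ) (hf : IsDomKBroadcast G k f)
    (u v : V) (hleaf : IsLeaf G u) (hsupp : G.Adj u v) (hfu : 1 ≤ f u) :
    IsDomKBroadcast G k
      (fun w => if w = u then 0 else if w = v then max (f u) (f v) else f w) ∧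
    (∑ᶠ w : V, (if w = u then 0 else if w = v then max (f u) (f v) else f w)) ≤
      ∑ᶠ w : V, f w := by
  obtain ⟨hle, hdom⟩ := hf
  have huv : u ≠ v := G.ne_of_adj hsupp
  have hvu : v ≠ u := fun h => huv h.symm
  set g : V → ℕ := fun w => if w = u then 0 else if w = v then max (f u) (f v) else f w
    with hg
  constructor
  · constructor
    · intro w
      by_cases h1 : w = u
      · simp [hg, h1]
      · by_cases h2 : w = v
        · rw [h2]
          simp [hg, hvu]
          exact ⟨hle u, hle v⟩
        · simp [hg, h1, h2, hle w]
    · intro x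
      obtain ⟨y, hy1, hy2, hy3⟩ := hdom x
      by_cases hyu : y = u
      · rw [hyu] at hy3
        refine ⟨v, ?_, hG x v, ?_⟩
        · simp [hg, hvu]; omega
        · by_cases hxu : x = u
          · have hd1 : G.dist x v = 1 := by
              rw [hxu]; exact SimpleGraph.dist_eq_one_iff_adj.mpr hsupp
            simp [hg, hvu, hd1]; omega
          · have := dist_support_lt G hG u v hleaf hsupp x hxu
            simp [hg, hvu]; omega
      · by_cases hyv : y = v
        · rw [hyv] at hy1 hy2 hy3
          refine ⟨v, ?_, hy2, ?_⟩
          · simp [hg, hvu]; omega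
          · simp [hg, hvu]; omega
        · exact ⟨y, by simpa [hg, hyu, hyv] using hy1, hy2, by simpa [hg, hyu, hyv] using hy3⟩
  · rw [finsum_eq_sum_of_fintype, finsum_eq_sum_of_fintype]
    have hu : u ∈ (Finset.univ : Finset V) := Finset.mem_univ u
    have hv' : v ∈ (Finset.univ.erase u : Finset V) := by
      simp [hvu]
    rw [← Finset.add_sum_erase _ g hu, ← Finset.add_sum_erase _ g hv',
        ← Finset.add_sum_erase _ f hu, ← Finset.add_sum_erase _ f hv']
    have hrest : ∑ x ∈ (Finset.univ.erase u).erase v, g x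
        = ∑ x ∈ (Finset.univ.erase u).erase v, f x := by
      apply Finset.sum_congr rfl
      intro x hx
      simp only [Finset.mem_erase] at hx
      simp [hg, hx.1, hx.2.1]
    rw [hrest]
    have : g u = 0 := by simp [hg]
    have : g v = max (f u) (f v) := by simp [hg, hvu]
    simp [hg, hvu]
    omega
end
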